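/- Let f be continuous on an open set G, let (x_k) ⊆ G be a bounded sequence with all accumulation points in G, such that f(x_k) is nonincreasing and Ψ(x_{k+1}, x_k) ≤ λ_k (f(x_k) − f(x_{k+1})) with 0 < λ_k ≤ R. If Ψ is jointly continuous, Ψ ≥ 0, and Ψ is separating on a subspace V with orthogonal projection P (i.e., Ψ(x',x) = 0 implies Px' = Px), then P(x_{k+1} − x_k) → 0. -/

import Mathlib

open Filter Metric

/-- If (x_k) ⊆ G is bounded with accumulation points in G, f(x_k) is
nonincreasing, Ψ(x_{k+1},x_k) ≤ λ_k (f(x_k) − f(x_{k+1})) with 0 < λ_k ≤ R, Ψ is jointly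
continuous, nonnegative and separating on a subspace V with orthogonal projection P,
then P(x_{k+1} − x_k) → 0. -/
theorem projected_steps_tendsto_zero {n : ℕ} (G : Set (EuclideanSpace ℝ (Fin n)))
    (hG : IsOpen G)
    (f : EuclideanSpace ℝ (Fin n) → ℝ) (hf : ContinuousOn f G)
    (Ψ : EuclideanSpace ℝ (Fin n) → EuclideanSpace ℝ (Fin n) → ℝ)
    (hΨcont : ContinuousOn (fun p : EuclideanSpace ℝ (Fin n) × EuclideanSpace ℝ (Fin n) =>
      Ψ p.1 p.2) (G ×ˢ G))
    (hΨnonneg : ∀ x y, 0 ≤ Ψ x y)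
    (V : Submodule ℝ (EuclideanSpace ℝ (Fin n)))
    (hsep : ∀ x' x, x' ∈ G → x ∈ G → Ψ x' x = 0 →
      (V.orthogonalProjectionOnto x' : EuclideanSpace ℝ (Fin n)) = V.orthogonalProjectionOnto x)
    (x : ℕ → EuclideanSpace ℝ (Fin n)) (hxG : ∀ k, x k ∈ G)
    (hbdd : Bornology.IsBounded (Set.range x))
    (hacc : ∀ p, MapClusterPt p atTop x → p ∈ G)
    (hmono : ∀ k, f (x (k + 1)) ≤ f (x k))
    (lam : ℕ → ℝ) (R : ℝ) (hlam : ∀ k, 0 < lam k) (hlamR : ∀ k, lam k ≤ R)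
    (hdesc : ∀ k, Ψ (x (k + 1)) (x k) ≤ lam k * (f (x k) - f (x (k + 1)))) :
    Tendsto (fun k => (V.orthogonalProjectionOnto (x (k + 1)) : EuclideanSpace ℝ (Fin n)) -
      V.orthogonalProjectionOnto (x k)) atTop (nhds 0) := by
  -- f ∘ x is antitone
  have hanti : Antitone (fun k => f (x k)) := antitone_nat_of_succ_le fun k => hmono k
  -- f ∘ x is bounded below, via a cluster point
  obtain ⟨p0, -, φ0, hφ0, hx0⟩ :=
    tendsto_subseq_of_bounded hbdd (fun k => Set.mem_range_self (f := x) k)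
  have hp0G : p0 ∈ G := hacc p0 (MapClusterPt.of_comp hφ0.tendsto_atTop hx0.mapClusterPt)
  have hf0 : Tendsto (fun j => f (x (φ0 j))) atTop (nhds (f p0)) :=
    (hf.continuousAt (hG.mem_nhds hp0G)).tendsto.comp hx0
  have hbelow : ∀ k, f p0 ≤ f (x k) := by
    intro k
    refine le_of_tendsto hf0 ?_
    filter_upwards [eventually_ge_atTop k] with j hj
    exact hanti (hj.trans (hφ0.le_apply))
  -- f ∘ x converges
  have hconv : Tendsto (fun k => f (x k)) atTop (nhds (⨅ k, f (x k))) :=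
    tendsto_atTop_ciInf hanti ⟨f p0, by rintro y ⟨k, rfl⟩; exact hbelow k⟩
  have hconv' : Tendsto (fun k => f (x (k + 1))) atTop (nhds (⨅ k, f (x k))) :=
    hconv.comp (tendsto_add_atTop_nat 1)
  have hdiff : Tendsto (fun k => f (x k) - f (x (k + 1))) atTop (nhds 0) := by
    have := hconv.sub hconv'
    simpa using this
  -- Ψ along the sequence tends to 0
  have hΨ0 : Tendsto (fun k => Ψ (x (k + 1)) (x k)) atTop (nhds 0) := by
    have hR : Tendsto (fun k => R * (f (x k) - f (x (k + 1)))) atTop (nhds 0) := by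
      simpa using hdiff.const_mul R
    refine squeeze_zero (fun k => hΨnonneg _ _) (fun k => (hdesc k).trans ?_) hR
    exact mul_le_mul_of_nonneg_right (hlamR k) (sub_nonneg.mpr (hmono k))
  -- continuity of the projection
  have hPcont : Continuous fun y : EuclideanSpace ℝ (Fin n) =>
      (V.orthogonalProjectionOnto y : EuclideanSpace ℝ (Fin n)) :=
    continuous_subtype_val.comp V.orthogonalProjectionOnto.continuous
  -- main argument by subsequences
  refine tendsto_of_subseq_tendsto fun ns hns => ?_
  have hb1 : Bornology.IsBounded (Set.range fun j => x (ns j)) :=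
    hbdd.subset (Set.range_comp_subset_range ns x)
  obtain ⟨q, -, φ1, hφ1, hq⟩ :=
    tendsto_subseq_of_bounded hb1 (fun j => Set.mem_range_self (f := fun j => x (ns j)) j)
  have hb2 : Bornology.IsBounded (Set.range fun j => x (ns (φ1 j) + 1)) :=
    hbdd.subset (by rintro y ⟨j, rfl⟩; exact ⟨_, rfl⟩)
  obtain ⟨p, -, φ2, hφ2, hp⟩ :=
    tendsto_subseq_of_bounded hb2
      (fun j => Set.mem_range_self (f := fun j => x (ns (φ1 j) + 1)) j)
  refine ⟨φ1 ∘ φ2, ?_⟩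
  set ms : ℕ → ℕ := fun j => ns (φ1 (φ2 j)) with hms
  have hmsTop : Tendsto ms atTop atTop :=
    hns.comp ((hφ1.comp hφ2).tendsto_atTop)
  have hq2 : Tendsto (fun j => x (ms j)) atTop (nhds q) := hq.comp hφ2.tendsto_atTop
  have hp2 : Tendsto (fun j => x (ms j + 1)) atTop (nhds p) := hp
  have hqG : q ∈ G := hacc q (MapClusterPt.of_comp hmsTop hq2.mapClusterPt)
  have hpG : p ∈ G := by
    refine hacc p (MapClusterPt.of_comp (φ := fun j => ms j + 1) ?_ hp2.mapClusterPt)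
    exact tendsto_atTop_mono (fun j => Nat.le_succ _) hmsTop
  -- Ψ p q = 0
  have hΨpq : Ψ p q = 0 := by
    have h1 : Tendsto (fun j => Ψ (x (ms j + 1)) (x (ms j))) atTop (nhds (Ψ p q)) := by
      have hc : ContinuousAt (fun pr : EuclideanSpace ℝ (Fin n) × EuclideanSpace ℝ (Fin n) =>
          Ψ pr.1 pr.2) (p, q) :=
        hΨcont.continuousAt ((hG.prod hG).mem_nhds ⟨hpG, hqG⟩)
      exact hc.tendsto.comp (hp2.prodMk_nhds hq2)
    have h2 : Tendsto (fun j => Ψ (x (ms j + 1)) (x (ms j))) atTop (nhds 0) :=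
      hΨ0.comp hmsTop
    exact tendsto_nhds_unique h1 h2
  have hPpq := hsep p q hpG hqG hΨpq
  have hfin : Tendsto (fun j =>
      (V.orthogonalProjectionOnto (x (ms j + 1)) : EuclideanSpace ℝ (Fin n)) -
      V.orthogonalProjectionOnto (x (ms j))) atTop
      (nhds ((V.orthogonalProjectionOnto p : EuclideanSpace ℝ (Fin n)) -
        V.orthogonalProjectionOnto q)) :=
    ((hPcont.tendsto p).comp hp2).sub ((hPcont.tendsto q).comp hq2)
  rw [hPpq, sub_self] at hfin
  exact hfin
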